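/- Let T > 0, let M : ℝ^n → (J × n real matrices) be continuous with c > 0 such that ‖M(x) y‖ ≥ c ‖y‖ for all x, y ∈ ℝ^n, let v ∈ ℝ^n, and let ρ : [0,T] × ℝ^n → ℝ be continuous and bounded. Then ρ(T, v) = (2π)^{−n/2} √(det(M(v)ᵀ M(v))) · lim_{t → T⁻} (T−t)^{−n/2} ∫_{ℝ^n} ρ(t,q) exp(−‖M(q)(q−v)‖²/(2(T−t))) dq. -/

import Mathlib

open MeasureTheory Matrix

/-- The Euclidean norm of a vector in `ℝ^k`. -/
noncomputable def eucNorm {k : ℕ} (v : Fin k → ℝ) : ℝ :=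
  ‖(EuclideanSpace.equiv (Fin k) ℝ).symm v‖

open Real

lemma enorm_sq_eq {k : ℕ} (w : Fin k → ℝ) : eucNorm w ^ 2 = w ⬝ᵥ w := by
  simp only [eucNorm, EuclideanSpace.norm_eq]
  rw [Real.sq_sqrt (by positivity)]
  simp [dotProduct, Real.norm_eq_abs, sq_abs, sq]

-- quadratic form identity
lemma dot_transpose_mul {J n : ℕ} (A : Matrix (Fin J) (Fin n) ℝ) (y : Fin n → ℝ) :
    y ⬝ᵥ (Aᵀ * A) *ᵥ y = (A *ᵥ y) ⬝ᵥ (A *ᵥ y) := by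
  rw [← Matrix.mulVec_mulVec, Matrix.dotProduct_mulVec, Matrix.vecMul_transpose]

-- base gaussian over pi
lemma base_gaussian (n : ℕ) :
    ∫ u : Fin n → ℝ, rexp (-(u ⬝ᵥ u) / 2) = (2 * π) ^ ((n : ℝ) / 2) := by
  have e := (EuclideanSpace.volume_preserving_symm_measurableEquiv_toLp (Fin n))
  rw [← e.integral_comp (MeasurableEquiv.measurableEmbedding _)]
  have : ∀ x : EuclideanSpace ℝ (Fin n),
      rexp (-((MeasurableEquiv.toLp 2 (Fin n → ℝ)).symm x ⬝ᵥ (MeasurableEquiv.toLp 2 (Fin n → ℝ)).symm x) / 2)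
        = rexp (-(1/2) * ‖x‖ ^ 2) := by
    intro x
    congr 1
    rw [EuclideanSpace.norm_eq, Real.sq_sqrt (by positivity)]
    simp [dotProduct, Real.norm_eq_abs, sq_abs, sq]
    ring
  simp only [Function.comp_def, this]
  rw [GaussianFourier.integral_rexp_neg_mul_sq_norm (by norm_num : (0:ℝ) < 1/2)]
  rw [finrank_euclideanSpace_fin]
  congr 1
  rw [div_div_eq_mul_div, div_one, mul_comm]

open scoped MatrixOrder

lemma gauss_matrix {n : ℕ} (A : Matrix (Fin n) (Fin n) ℝ) (hA : A.PosDef) :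
    ∫ u : Fin n → ℝ, rexp (-(u ⬝ᵥ A *ᵥ u) / 2) = (2 * π) ^ ((n : ℝ) / 2) / Real.sqrt A.det := by
  classical
  set S := CFC.sqrt A with hSdef
  have hS : S.PosSemidef := (CFC.sqrt_nonneg A).posSemidef
  have hSS : S * S = A := CFC.sqrt_mul_sqrt_self A hA.posSemidef.nonneg
  have hSym : Sᵀ = S := by
    have := hS.1
    rwa [Matrix.IsHermitian, conjTranspose_eq_transpose_of_trivial] at this
  have hdet2 : S.det * S.det = A.det := by rw [← det_mul, hSS]
  have hAdet : 0 < A.det := hA.det_pos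
  have hSdet_ne : S.det ≠ 0 := by
    intro h; rw [h, mul_zero] at hdet2; exact hAdet.ne (by linarith)
  have habs : |S.det| = Real.sqrt A.det := by
    rw [← Real.sqrt_sq_eq_abs, sq, hdet2]
  -- quadratic form via S
  have hquad : ∀ u : Fin n → ℝ, u ⬝ᵥ A *ᵥ u = (S *ᵥ u) ⬝ᵥ (S *ᵥ u) := by
    intro u
    calc u ⬝ᵥ A *ᵥ u = u ⬝ᵥ (S *ᵥ (S *ᵥ u)) := by rw [← hSS, ← Matrix.mulVec_mulVec]
      _ = (u ᵥ* S) ⬝ᵥ (S *ᵥ u) := Matrix.dotProduct_mulVec u S _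
      _ = (Sᵀ *ᵥ u) ⬝ᵥ (S *ᵥ u) := by rw [Matrix.mulVec_transpose]
      _ = (S *ᵥ u) ⬝ᵥ (S *ᵥ u) := by rw [hSym]
  -- change of variables
  set f : ((Fin n → ℝ)) →ₗ[ℝ] (Fin n → ℝ) := Matrix.toLin' S with hfdef
  have hfdet : LinearMap.det f = S.det := LinearMap.det_toLin' S
  have hfeq : ∀ u, f u = S *ᵥ u := fun u => rfl
  have hmap : Measure.map f volume = ENNReal.ofReal |(LinearMap.det f)⁻¹| • volume :=
    Real.map_linearMap_volume_pi_eq_smul_volume_pi (by rw [hfdet]; exact hSdet_ne)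
  have hfc : Continuous f := LinearMap.continuous_of_finiteDimensional f
  have hdotc : Continuous fun y : Fin n → ℝ => y ⬝ᵥ y :=
    continuous_finset_sum _ fun i _ => (continuous_apply i).mul (continuous_apply i)
  have hgc : Continuous fun y : Fin n → ℝ => rexp (-(y ⬝ᵥ y) / 2) :=
    Real.continuous_exp.comp ((hdotc.neg).div_const 2)
  have key : ∫ u : Fin n → ℝ, rexp (-(f u ⬝ᵥ f u) / 2)
      = |S.det|⁻¹ * ∫ y : Fin n → ℝ, rexp (-(y ⬝ᵥ y) / 2) := by
    calc ∫ u : Fin n → ℝ, rexp (-(f u ⬝ᵥ f u) / 2)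
        = ∫ y : Fin n → ℝ, rexp (-(y ⬝ᵥ y) / 2) ∂(Measure.map f volume) :=
          (integral_map hfc.aemeasurable hgc.aestronglyMeasurable).symm
      _ = |S.det|⁻¹ * ∫ y : Fin n → ℝ, rexp (-(y ⬝ᵥ y) / 2) := by
          rw [hmap, integral_smul_measure, ENNReal.toReal_ofReal (abs_nonneg _), hfdet, abs_inv]
          rfl
  simp_rw [hquad, ← hfeq]
  rw [key, base_gaussian, habs, inv_mul_eq_div]

lemma posdef_of_lower {n J : ℕ} (B : Matrix (Fin J) (Fin n) ℝ) (c : ℝ) (hc : 0 < c)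
    (hB : ∀ y : Fin n → ℝ, c * eucNorm y ≤ eucNorm (B *ᵥ y)) : (Bᵀ * B).PosDef := by
  rw [Matrix.posDef_iff_dotProduct_mulVec]
  constructor
  · rw [Matrix.IsHermitian, conjTranspose_eq_transpose_of_trivial, Matrix.transpose_mul,
      Matrix.transpose_transpose]
  · intro x hx
    have h1 : x ⬝ᵥ (Bᵀ * B) *ᵥ x = eucNorm (B *ᵥ x) ^ 2 := by
      rw [enorm_sq_eq, dot_transpose_mul]
    have h2 : 0 < eucNorm x := by
      apply norm_pos_iff.mpr
      intro h
      apply hx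
      have := congrArg (WithLp.equiv 2 (Fin n → ℝ)) h
      simpa using this
    have h3 : 0 < c * eucNorm x := mul_pos hc h2
    have : star x = x := rfl
    rw [this, h1]
    have := hB x
    nlinarith [norm_nonneg ((EuclideanSpace.equiv (Fin J) ℝ).symm (B *ᵥ x))]

lemma integrable_bound {n : ℕ} (b : ℝ) (hb : 0 < b) :
    Integrable (fun u : Fin n → ℝ => rexp (-b * eucNorm u ^ 2)) := by
  have e := (EuclideanSpace.volume_preserving_symm_measurableEquiv_toLp (Fin n)).symm
  have hE : Integrable (fun x : EuclideanSpace ℝ (Fin n) => rexp (-b * ‖x‖ ^ 2)) := by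
    have h := (GaussianFourier.integrable_cexp_neg_mul_sq_norm_add
      (V := EuclideanSpace ℝ (Fin n)) (b := (b : ℂ)) (by simpa using hb) 0 0).norm
    apply h.congr
    filter_upwards with x
    rw [Complex.norm_exp]
    norm_num [Complex.add_re, Complex.mul_re]
    left
    norm_cast
  have := (e.integrable_comp_emb (MeasurableEquiv.measurableEmbedding _)).mpr hE
  exact this

lemma enorm_nonneg' {k : ℕ} (w : Fin k → ℝ) : 0 ≤ eucNorm w := norm_nonneg _

lemma eucNorm_smul {k : ℕ} (a : ℝ) (w : Fin k → ℝ) : eucNorm (a • w) = |a| * eucNorm w := by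
  simp only [eucNorm, _root_.map_smul, norm_smul, Real.norm_eq_abs]

set_option maxHeartbeats 1000000

/-- The density lemma: the value of a bounded continuous density `ρ` at the target point `v`
at time `T` is recovered from Gaussian-weighted integrals,
`ρ(T,v) = (2π)^{−n/2} √(det(M(v)ᵀ M(v))) lim_{t→T⁻} (T−t)^{−n/2}
  ∫ ρ(t,q) exp(−‖M(q)(q−v)‖²/(2(T−t))) dq`. -/
theorem gaussian_density_limit (n J : ℕ) (T : ℝ) (hT : 0 < T)
    (M : (Fin n → ℝ) → Matrix (Fin J) (Fin n) ℝ) (hM : Continuous M)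
    (c : ℝ) (hc : 0 < c) (hMc : ∀ x y : Fin n → ℝ, c * eucNorm y ≤ eucNorm (M x *ᵥ y))
    (v : Fin n → ℝ)
    (ρ : ℝ → (Fin n → ℝ) → ℝ)
    (hρcont : ContinuousOn (fun z : ℝ × (Fin n → ℝ) => ρ z.1 z.2)
      (Set.Icc 0 T ×ˢ Set.univ))
    (C : ℝ) (hρbdd : ∀ t ∈ Set.Icc (0 : ℝ) T, ∀ q : Fin n → ℝ, |ρ t q| ≤ C) :
    Filter.Tendsto
      (fun t : ℝ =>
        (2 * π) ^ (-(n : ℝ) / 2) * Real.sqrt (((M v)ᵀ * M v).det)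
          * ((T - t) ^ (-(n : ℝ) / 2)
            * ∫ q : Fin n → ℝ,
                ρ t q * Real.exp (-eucNorm (M q *ᵥ (q - v)) ^ 2 / (2 * (T - t)))))
      (nhdsWithin T (Set.Ioo 0 T))
      (nhds (ρ T v)) := by
  classical
  set l := nhdsWithin T (Set.Ioo 0 T) with hl
  set A : Matrix (Fin n) (Fin n) ℝ := (M v)ᵀ * M v with hAdef
  have hA : A.PosDef := posdef_of_lower (M v) c hc (fun y => hMc v y)
  have hdetpos : 0 < A.det := hA.det_pos
  set K : ℝ := (2 * π) ^ (-(n : ℝ) / 2) * Real.sqrt A.det with hK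
  -- continuity helpers
  have hmulvec : Continuous fun p : ((Fin n → ℝ) × (Fin n → ℝ)) => M p.1 *ᵥ p.2 :=
    (hM.comp continuous_fst).matrix_mulVec continuous_snd
  have henorm : Continuous fun w : Fin J → ℝ => eucNorm w :=
    (EuclideanSpace.equiv (Fin J) ℝ).symm.continuous.norm
  have hρt : ∀ t ∈ Set.Icc (0 : ℝ) T, Continuous fun q => ρ t q := by
    intro t ht
    rw [← continuousOn_univ]
    exact hρcont.comp (continuous_const.prodMk continuous_id).continuousOn
      (fun q _ => ⟨ht, trivial⟩)
  have hgc : ∀ a : ℝ, Continuous fun u : Fin n → ℝ => v + a • u := fun a =>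
    continuous_const.add (continuous_id.const_smul a)
  have hinner : ∀ a : ℝ, Continuous fun u : Fin n → ℝ => eucNorm (M (v + a • u) *ᵥ u) :=
    fun a => henorm.comp (hmulvec.comp ((hgc a).prodMk continuous_id))
  -- the rescaled integral
  set Φ : ℝ → ℝ := fun t => ∫ u : Fin n → ℝ,
    ρ t (v + Real.sqrt (T - t) • u)
      * rexp (-eucNorm (M (v + Real.sqrt (T - t) • u) *ᵥ u) ^ 2 / 2) with hΦ
  have hCnn : 0 ≤ C := (abs_nonneg _).trans (hρbdd T ⟨hT.le, le_refl T⟩ v)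
  -- Step 1 : dominated convergence
  have step1 : Filter.Tendsto Φ l
      (nhds (∫ u : Fin n → ℝ, ρ T v * rexp (-eucNorm (M v *ᵥ u) ^ 2 / 2))) := by
    apply tendsto_integral_filter_of_dominated_convergence
      (bound := fun u : Fin n → ℝ => C * rexp (-(c ^ 2 / 2) * eucNorm u ^ 2))
    · filter_upwards [self_mem_nhdsWithin] with t ht
      exact (((hρt t ⟨ht.1.le, ht.2.le⟩).comp (hgc _)).mul
        (Real.continuous_exp.comp
          ((((hinner _).pow 2).neg).div_const 2))).aestronglyMeasurable
    · filter_upwards [self_mem_nhdsWithin] with t ht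
      filter_upwards with u
      have hb1 : |ρ t (v + Real.sqrt (T - t) • u)| ≤ C :=
        hρbdd t ⟨ht.1.le, ht.2.le⟩ _
      have hb2 : rexp (-eucNorm (M (v + Real.sqrt (T - t) • u) *ᵥ u) ^ 2 / 2)
          ≤ rexp (-(c ^ 2 / 2) * eucNorm u ^ 2) := by
        apply Real.exp_le_exp.mpr
        have h := hMc (v + Real.sqrt (T - t) • u) u
        have h2 : (c * eucNorm u) ^ 2 ≤ eucNorm (M (v + Real.sqrt (T - t) • u) *ᵥ u) ^ 2 :=
          pow_le_pow_left₀ (mul_nonneg hc.le (enorm_nonneg' u)) h 2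
        rw [mul_pow] at h2
        nlinarith
      calc ‖ρ t (v + Real.sqrt (T - t) • u)
            * rexp (-eucNorm (M (v + Real.sqrt (T - t) • u) *ᵥ u) ^ 2 / 2)‖
          = |ρ t (v + Real.sqrt (T - t) • u)|
            * rexp (-eucNorm (M (v + Real.sqrt (T - t) • u) *ᵥ u) ^ 2 / 2) := by
            rw [Real.norm_eq_abs, abs_mul, abs_of_pos (Real.exp_pos _)]
        _ ≤ C * rexp (-(c ^ 2 / 2) * eucNorm u ^ 2) :=
            mul_le_mul hb1 hb2 (Real.exp_pos _).le hCnn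
    · exact (integrable_bound (c ^ 2 / 2) (by positivity)).const_mul C
    · filter_upwards with u
      have hGT : v + Real.sqrt (T - T) • u = v := by simp
      have hGc : Continuous fun t : ℝ => ((t, v + Real.sqrt (T - t) • u) : ℝ × (Fin n → ℝ)) :=
        continuous_id.prodMk (continuous_const.add
          ((Real.continuous_sqrt.comp (continuous_const.sub continuous_id)).smul
            continuous_const))
      have hmaps : Set.MapsTo (fun t : ℝ => ((t, v + Real.sqrt (T - t) • u) : ℝ × (Fin n → ℝ)))
          (Set.Ioo 0 T) (Set.Icc 0 T ×ˢ Set.univ) :=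
        fun t ht => ⟨⟨ht.1.le, ht.2.le⟩, trivial⟩
      have h1 : Filter.Tendsto (fun t : ℝ => ((t, v + Real.sqrt (T - t) • u) : ℝ × (Fin n → ℝ))) l
          (nhdsWithin (T, v) (Set.Icc 0 T ×ˢ Set.univ)) := by
        have := (hGc.continuousWithinAt (s := Set.Ioo 0 T) (x := T)).tendsto_nhdsWithin hmaps
        rwa [hGT] at this
      have h2 : Filter.Tendsto (fun t : ℝ => ρ t (v + Real.sqrt (T - t) • u)) l
          (nhds (ρ T v)) :=
        Filter.Tendsto.comp (hρcont (T, v) ⟨⟨hT.le, le_refl T⟩, trivial⟩) h1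
      have h3 : Filter.Tendsto
          (fun t : ℝ => rexp (-eucNorm (M (v + Real.sqrt (T - t) • u) *ᵥ u) ^ 2 / 2)) l
          (nhds (rexp (-eucNorm (M v *ᵥ u) ^ 2 / 2))) := by
        have hc3 : Continuous fun t : ℝ =>
            rexp (-eucNorm (M (v + Real.sqrt (T - t) • u) *ᵥ u) ^ 2 / 2) := by
          apply Real.continuous_exp.comp
          apply Continuous.div_const
          apply Continuous.neg
          apply Continuous.pow
          exact henorm.comp (hmulvec.comp ((continuous_const.add
            ((Real.continuous_sqrt.comp (continuous_const.sub continuous_id)).smul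
              continuous_const)).prodMk continuous_const))
        have := (hc3.tendsto T).mono_left (nhdsWithin_le_nhds (s := Set.Ioo 0 T))
        rwa [hGT] at this
      exact h2.mul h3
  -- Step 2 : value of the limit integral
  have hGval : ∫ u : Fin n → ℝ, ρ T v * rexp (-eucNorm (M v *ᵥ u) ^ 2 / 2)
      = ρ T v * ((2 * π) ^ ((n : ℝ) / 2) / Real.sqrt A.det) := by
    rw [MeasureTheory.integral_const_mul]
    congr 1
    have heq : ∀ u : Fin n → ℝ,
        rexp (-eucNorm (M v *ᵥ u) ^ 2 / 2) = rexp (-(u ⬝ᵥ A *ᵥ u) / 2) := by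
      intro u
      congr 2
      rw [enorm_sq_eq, hAdef, dot_transpose_mul]
    simp_rw [heq]
    exact gauss_matrix A hA
  -- Step 3 : eventual equality of the two expressions
  have step3 : ∀ᶠ t in l,
      K * Φ t
        = (2 * π) ^ (-(n : ℝ) / 2) * Real.sqrt (((M v)ᵀ * M v).det)
          * ((T - t) ^ (-(n : ℝ) / 2)
            * ∫ q : Fin n → ℝ,
                ρ t q * Real.exp (-eucNorm (M q *ᵥ (q - v)) ^ 2 / (2 * (T - t)))) := by
    filter_upwards [self_mem_nhdsWithin] with t ht
    have hs : 0 < T - t := sub_pos.mpr ht.2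
    set s : ℝ := T - t with hsdef
    set a : ℝ := Real.sqrt s with hadef
    have ha : 0 < a := Real.sqrt_pos.mpr hs
    set f : (Fin n → ℝ) → ℝ := fun q =>
      ρ t q * rexp (-eucNorm (M q *ᵥ (q - v)) ^ 2 / (2 * s)) with hfdef
    have han : a ^ n = s ^ ((n : ℝ) / 2) := by
      rw [hadef, Real.sqrt_eq_rpow, ← Real.rpow_natCast (s ^ ((1:ℝ)/2)) n,
        ← Real.rpow_mul hs.le]
      congr 1
      ring
    have hchange : ∫ u : Fin n → ℝ, f (v + a • u) = (a ^ n)⁻¹ * ∫ q, f q := by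
      have h1 : ∫ u : Fin n → ℝ, f (v + a • u)
          = ∫ u : Fin n → ℝ, (fun w => f (v + w)) (a • u) := rfl
      rw [h1, MeasureTheory.Measure.integral_comp_smul volume (fun w => f (v + w)) a,
        Module.finrank_fin_fun, integral_add_left_eq_self]
      rw [abs_of_pos (by positivity), smul_eq_mul]
    have hint : ∀ u : Fin n → ℝ, f (v + a • u)
        = ρ t (v + a • u) * rexp (-eucNorm (M (v + a • u) *ᵥ u) ^ 2 / 2) := by
      intro u
      simp only [hfdef]
      have h0 : eucNorm (M (v + a • u) *ᵥ ((v + a • u) - v)) ^ 2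
          = s * eucNorm (M (v + a • u) *ᵥ u) ^ 2 := by
        rw [add_sub_cancel_left, Matrix.mulVec_smul, eucNorm_smul, abs_of_pos ha,
          mul_pow, hadef, Real.sq_sqrt hs.le]
      congr 1
      rw [h0]
      field_simp
    have hΦt : ∫ u : Fin n → ℝ, f (v + a • u) = Φ t := by
      simp_rw [hint]
      rfl
    have hfinal : s ^ (-(n : ℝ) / 2) * ∫ q, f q = Φ t := by
      have h4 : ∫ q, f q = a ^ n * ∫ u : Fin n → ℝ, f (v + a • u) := by
        rw [hchange, ← mul_assoc, mul_inv_cancel₀ (by positivity), one_mul]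
      rw [h4, hΦt, han, ← mul_assoc, ← Real.rpow_add hs,
        show (-(n:ℝ)/2 + (n:ℝ)/2) = 0 by ring, Real.rpow_zero, one_mul]
    rw [← hAdef, ← hK, hfinal]
  -- Step 4 : assemble
  have hone : K * (ρ T v * ((2 * π) ^ ((n : ℝ) / 2) / Real.sqrt A.det)) = ρ T v := by
    have h2π : (2 * π) ^ (-(n : ℝ) / 2) * (2 * π) ^ ((n : ℝ) / 2) = 1 := by
      rw [← Real.rpow_add (by positivity), show (-(n:ℝ)/2 + (n:ℝ)/2) = 0 by ring,
        Real.rpow_zero]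
    have hsq : (0:ℝ) < Real.sqrt A.det := Real.sqrt_pos.mpr hdetpos
    calc K * (ρ T v * ((2 * π) ^ ((n : ℝ) / 2) / Real.sqrt A.det))
        = ρ T v * (((2 * π) ^ (-(n : ℝ) / 2) * (2 * π) ^ ((n : ℝ) / 2))
            * (Real.sqrt A.det / Real.sqrt A.det)) := by rw [hK]; ring
      _ = ρ T v := by rw [h2π, div_self hsq.ne']; ring
  have hKΦ : Filter.Tendsto (fun t => K * Φ t) l (nhds (ρ T v)) := by
    have := step1.const_mul K
    rwa [hGval, hone] at this
  exact Filter.Tendsto.congr' step3 hKΦ
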